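/- Let 𝒫 = {P_1,…,P_m} be a partition of {1,…,n} into m parts, each of even cardinality at least 2. Let Γ = {v ∈ (F_2)^n : Σ_{j∈P_i} v(j) = 0 for every i}, and let G ≤ Sym_n be the setwise stabilizer of 𝒫 (permutations mapping each part to some part). Then for every basis ℬ of (F_2)^n that contains a basis of Γ as a subset, the setwise stabilizer of ℬ in G under the coordinate-permutation action on vectors has index at least (∏_{i=1}^m |P_i|) / m! in G. -/

import Mathlib

open Finset


lemma fact_mul_fact_le' (s c : ℕ) (hs : 1 ≤ s) (hc : 1 ≤ c) :
    s.factorial * c.factorial ≤ (s + c - 1).factorial := by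
  induction c with
  | zero => omega
  | succ c ih =>
    rcases Nat.eq_or_lt_of_le hc with h1 | h1
    · obtain rfl : c = 0 := by omega
      simp [Nat.factorial]
    · have hc1 : 1 ≤ c := by omega
      have := ih hc1
      have h3 : s + (c + 1) - 1 = (s + c - 1) + 1 := by omega
      rw [h3, Nat.factorial_succ, Nat.factorial_succ]
      calc s.factorial * ((c+1) * c.factorial) = (c+1) * (s.factorial * c.factorial) := by ring
        _ ≤ (s + c - 1 + 1) * (s+c-1).factorial := by
            exact Nat.mul_le_mul (by omega) this



/-- Let `P₁,…,P_m` partition `{1,…,n}` into parts of even size `≥ 2`, let `Γ` be the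
subspace of `(F₂)^n` of vectors with even weight on each part, and let `G` be the
setwise stabilizer of the partition in `Sym_n`. Then for every basis `ℬ` of `(F₂)^n`
containing a basis of `Γ`, the setwise stabilizer of `ℬ` in `G` (under the
coordinate-permutation action) has index at least `(∏ᵢ |Pᵢ|)/m!` in `G`; i.e.
`(∏ᵢ |Pᵢ|) · |Stab_G(ℬ)| ≤ m! · |G|`. -/
theorem index_basis_stabilizer_large (n m : ℕ) (P : Fin m → Finset (Fin n))
    (hpart : ∀ a : Fin n, ∃! i : Fin m, a ∈ P i)
    (heven : ∀ i, Even (P i).card) (h2 : ∀ i, 2 ≤ (P i).card)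
    (Γ : Submodule (ZMod 2) (Fin n → ZMod 2))
    (hΓ : ∀ v : Fin n → ZMod 2, v ∈ Γ ↔ ∀ i, ∑ j ∈ P i, v j = 0)
    (G : Subgroup (Equiv.Perm (Fin n)))
    (hG : ∀ π : Equiv.Perm (Fin n), π ∈ G ↔ ∀ i, ∃ i', (P i).image π = P i')
    (ℬ : Set (Fin n → ZMod 2))
    (hind : LinearIndependent (ZMod 2) ((↑) : ℬ → (Fin n → ZMod 2)))
    (hspan : Submodule.span (ZMod 2) ℬ = ⊤)
    (ℬΓ : Set (Fin n → ZMod 2)) (hsub : ℬΓ ⊆ ℬ)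
    (hindΓ : LinearIndependent (ZMod 2) ((↑) : ℬΓ → (Fin n → ZMod 2)))
    (hspanΓ : Submodule.span (ZMod 2) ℬΓ = Γ) :
    (∏ i, (P i).card) *
        Nat.card {π : Equiv.Perm (Fin n) //
          π ∈ G ∧ (fun v : Fin n → ZMod 2 => fun j => v (π⁻¹ j)) '' ℬ = ℬ} ≤
      Nat.factorial m * Nat.card G := by
  classical
  -- part function
  choose part hpmem hpuniq using fun a => hpart a
  have hdisj : ∀ {i j : Fin m} {a : Fin n}, a ∈ P i → a ∈ P j → i = j := by
    intro i j a hi hj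
    rw [hpuniq a i hi, hpuniq a j hj]
  have hne : ∀ i, (P i).Nonempty := fun i => card_pos.mp (by have := h2 i; omega)
  have hPeq : ∀ {i j : Fin m}, P i = P j → i = j := by
    intro i j h
    obtain ⟨a, ha⟩ := hne i
    exact hdisj ha (h ▸ ha)
  -- the action
  set A : Equiv.Perm (Fin n) → (Fin n → ZMod 2) → (Fin n → ZMod 2) :=
    fun π => fun v : Fin n → ZMod 2 => fun j => v (π⁻¹ j) with hA
  have hAmul : ∀ π τ v, A (π * τ) v = A π (A τ v) := by
    intro π τ v; funext j; simp [hA]; rfl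
  have hAone : ∀ v, A 1 v = v := by intro v; funext j; simp [hA]; rfl
  have hAinj : ∀ π, Function.Injective (A π) := by
    intro π v w h
    funext j
    have := congrFun h (π j)
    simpa [hA] using this
  have hAinv : ∀ π v, A π⁻¹ (A π v) = v := by
    intro π v; rw [← hAmul, inv_mul_cancel, hAone]
  -- K predicate
  set Kp : Equiv.Perm (Fin n) → Prop := fun π => ∀ i, (P i).image π = P i with hKp
  have hKinv : ∀ {π}, Kp π → Kp π⁻¹ := by
    intro π h i
    calc (P i).image ⇑π⁻¹ = ((P i).image ⇑π).image ⇑π⁻¹ := by rw [h i]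
      _ = (P i).image (⇑π⁻¹ ∘ ⇑π) := image_image
      _ = P i := by
          have h2 : ⇑π⁻¹ ∘ ⇑π = id := by funext x; simp
          rw [h2, image_id]
  have hKmul : ∀ {π τ}, Kp π → Kp τ → Kp (π * τ) := by
    intro π τ hπ hτ i
    have : ⇑(π * τ) = ⇑π ∘ ⇑τ := rfl
    rw [this, ← image_image, hτ i, hπ i]
  have hKmemG : ∀ {π}, Kp π → π ∈ G := fun {π} h => (hG π).mpr fun i => ⟨i, h i⟩
  have hKel : ∀ {π}, Kp π → ∀ {i a}, a ∈ P i → π a ∈ P i := by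
    intro π h i a ha
    have := h i
    rw [← this]
    exact mem_image_of_mem _ ha
  -- sums preserved
  have hKsum : ∀ {π}, Kp π → ∀ (v) (i), ∑ j ∈ P i, (A π v) j = ∑ j ∈ P i, v j := by
    intro π h v i
    have h1 : ∑ j ∈ (P i).image ⇑π⁻¹, v j = ∑ j ∈ P i, v (π⁻¹ j) :=
      sum_image (by intro x _ y _ h; exact π⁻¹.injective h)
    rw [hKinv h i] at h1
    exact h1.symm
  have hKΓ : ∀ {π}, Kp π → ∀ {v}, v ∈ Γ ↔ A π v ∈ Γ := by
    intro π h v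
    rw [hΓ, hΓ]
    constructor
    · intro hv i; rw [hKsum h v i]; exact hv i
    · intro hv i; rw [← hKsum h v i]; exact hv i
  -- linear map L
  set L : (Fin n → ZMod 2) →ₗ[ZMod 2] (Fin m → ZMod 2) :=
    { toFun := fun v i => ∑ j ∈ P i, v j
      map_add' := by intro v w; funext i; simp [Finset.sum_add_distrib]
      map_smul' := by intro c v; funext i; simp [Finset.mul_sum] } with hL
  have hLker : Γ = LinearMap.ker L := by
    ext v
    rw [hΓ, LinearMap.mem_ker]
    constructor
    · intro h; funext i; exact h i
    · intro h i; exact congrFun h i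
  -- delta vectors
  set δ : Fin n → (Fin n → ZMod 2) := fun a j => if j = a then 1 else 0 with hδ
  have hδsum : ∀ {i a}, a ∈ P i → ∑ j ∈ P i, δ a j = 1 := by
    intro i a ha
    rw [hδ]
    simp [Finset.sum_ite_eq' (P i) a (fun _ => (1 : ZMod 2)), ha]
  have hδsum0 : ∀ {i a}, a ∉ P i → ∑ j ∈ P i, δ a j = 0 := by
    intro i a ha
    rw [hδ]
    simp [Finset.sum_ite_eq' (P i) a (fun _ => (1 : ZMod 2)), ha]
  have hLsurj : Function.Surjective L := by
    intro w
    refine ⟨∑ i, w i • δ ((hne i).choose), ?_⟩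
    funext k
    have : L (∑ i, w i • δ ((hne i).choose)) k = ∑ i, w i * (∑ j ∈ P k, δ ((hne i).choose) j) := by
      simp [hL, Finset.mul_sum]
    rw [this]
    rw [Finset.sum_eq_single k]
    · rw [hδsum (hne k).choose_spec, mul_one]
    · intro i _ hik
      rw [hδsum0, mul_zero]
      intro hmem
      exact hik (hdisj (hne i).choose_spec hmem)
    · simp
  -- dimensions and cardinalities
  letI : Fintype ↥ℬ := (Set.toFinite ℬ).fintype
  letI : Fintype ↥ℬΓ := (Set.toFinite ℬΓ).fintype
  have hfrV : Module.finrank (ZMod 2) (Fin n → ZMod 2) = n := by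
    simp [Module.finrank_pi]
  have hcardB : ℬ.toFinset.card = n := by
    have := finrank_span_set_eq_card (R := ZMod 2) (s := ℬ) hind
    rw [hspan, finrank_top, hfrV] at this
    exact this.symm
  set k := Module.finrank (ZMod 2) Γ with hkdef
  have hcardBΓ : ℬΓ.toFinset.card = k := by
    have := finrank_span_set_eq_card (R := ZMod 2) (s := ℬΓ) hindΓ
    rw [hspanΓ] at this
    exact this.symm
  have hmk : m + k = n := by
    have h1 := LinearMap.finrank_range_add_finrank_ker L
    rw [LinearMap.range_eq_top.mpr hLsurj, finrank_top, ← hLker, hfrV] at h1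
    rw [show Module.finrank (ZMod 2) (Fin m → ZMod 2) = m by simp [Module.finrank_pi]] at h1
    rw [hkdef]
    exact h1
  set Bd : Finset (Fin n → ZMod 2) := ℬ.toFinset \ ℬΓ.toFinset with hBddef
  have hsubF : ℬΓ.toFinset ⊆ ℬ.toFinset := by
    intro x hx
    rw [Set.mem_toFinset] at hx ⊢
    exact hsub hx
  have hBdcard : Bd.card = m := by
    rw [hBddef, card_sdiff_of_subset hsubF, hcardB, hcardBΓ]
    omega
  have hmemBd : ∀ {v}, v ∈ Bd ↔ (v ∈ ℬ ∧ v ∉ ℬΓ) := by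
    intro v
    rw [hBddef, mem_sdiff, Set.mem_toFinset, Set.mem_toFinset]
  have hBcap : ∀ v, v ∈ ℬ → v ∈ Γ → v ∈ ℬΓ := by
    intro v hv hvΓ
    by_contra hnot
    have hx : v ∈ Submodule.span (ZMod 2) ℬΓ := by rw [hspanΓ]; exact hvΓ
    have himg : (Subtype.val '' {y : ↥ℬ | (y : Fin n → ZMod 2) ∈ ℬΓ}) = ℬΓ := by
      ext z
      simp only [Set.mem_image, Set.mem_setOf_eq]
      constructor
      · rintro ⟨y, hy, rfl⟩; exact hy
      · intro hz; exact ⟨⟨z, hsub hz⟩, hz, rfl⟩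
    have := hind.notMem_span_image (R := ZMod 2)
      (x := (⟨v, hv⟩ : ↥ℬ)) (s := {y : ↥ℬ | (y : Fin n → ZMod 2) ∈ ℬΓ}) hnot
    rw [himg] at this
    exact this hx
  -- choose odd-weight basis vectors per part
  have hz2 : ∀ x : ZMod 2, x = 0 ∨ x = 1 := by decide
  have hodd : ∀ i, ∃ v, v ∈ ℬ ∧ ∑ j ∈ P i, v j = 1 := by
    intro i
    by_contra hno
    push_neg at hno
    have hker : ∀ v ∈ ℬ, v ∈ LinearMap.ker ((LinearMap.proj i).comp L) := by
      intro v hv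
      rw [LinearMap.mem_ker]
      have := hno v hv
      rcases hz2 (∑ j ∈ P i, v j) with h | h
      · simpa [hL] using h
      · exact absurd h this
    have hsple : Submodule.span (ZMod 2) ℬ ≤ LinearMap.ker ((LinearMap.proj i).comp L) :=
      Submodule.span_le.mpr hker
    rw [hspan, top_le_iff] at hsple
    have hmem : δ ((hne i).choose) ∈ LinearMap.ker ((LinearMap.proj i).comp L) := by
      rw [hsple]; trivial
    rw [LinearMap.mem_ker] at hmem
    have : (1 : ZMod 2) = 0 := by
      have h1 : ((LinearMap.proj i).comp L) (δ ((hne i).choose)) = 1 := by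
        simp only [LinearMap.comp_apply, LinearMap.proj_apply]
        have : L (δ ((hne i).choose)) i = ∑ j ∈ P i, δ ((hne i).choose) j := rfl
        rw [this, hδsum (hne i).choose_spec]
      rw [h1] at hmem
      exact hmem
    exact one_ne_zero this
  choose b hbB hbsum using hodd
  have hbnΓ : ∀ i, b i ∉ Γ := by
    intro i hbΓ
    rw [hΓ] at hbΓ
    have h := hbΓ i
    rw [hbsum i] at h
    exact one_ne_zero h
  have hΓsub : ℬΓ ⊆ (Γ : Set (Fin n → ZMod 2)) := by
    rw [← hspanΓ]; exact Submodule.subset_span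
  have hbBd : ∀ i, b i ∈ Bd := by
    intro i
    exact hmemBd.mpr ⟨hbB i, fun h => hbnΓ i (hΓsub h)⟩
  -- support sets
  set S : Fin m → Finset (Fin n) := fun i => (P i).filter (fun a => b i a = 1) with hSdef
  set C : Fin m → Finset (Fin n) := fun i => (P i).filter (fun a => ¬ (b i a = 1)) with hCdef
  have hSC : ∀ i, (S i).card + (C i).card = (P i).card := fun i =>
    card_filter_add_card_filter_not _
  have hScast : ∀ i, (((S i).card : ZMod 2)) = 1 := by
    intro i
    have h1 : ∑ j ∈ P i, b i j = ∑ j ∈ S i, b i j + ∑ j ∈ C i, b i j :=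
      (sum_filter_add_sum_filter_not (P i) (fun a => b i a = 1) _).symm
    have h2 : ∑ j ∈ S i, b i j = ((S i).card : ZMod 2) := by
      rw [Finset.sum_congr rfl (fun x hx => (mem_filter.mp hx).2)]
      simp; rfl
    have h3 : ∑ j ∈ C i, b i j = 0 := by
      rw [Finset.sum_congr rfl (fun x hx => ?_), Finset.sum_const_zero]
      rcases hz2 (b i x) with h | h
      · exact h
      · exact absurd h (mem_filter.mp hx).2
    have h4 := hbsum i
    rw [h1, h2, h3, add_zero] at h4
    exact h4
  have hSndvd : ∀ i, ¬ (2 ∣ (S i).card) := by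
    intro i hdvd
    have := (ZMod.natCast_eq_zero_iff ((S i).card) 2).mpr hdvd
    rw [hScast i] at this
    exact one_ne_zero this
  have hS1 : ∀ i, 1 ≤ (S i).card := by
    intro i
    have := hSndvd i
    omega
  have hC1 : ∀ i, 1 ≤ (C i).card := by
    intro i
    have h1 := hSC i
    have h2 := hSndvd i
    have h3 : 2 ∣ (P i).card := (heven i).two_dvd
    omega
  -- image action lemmas
  have hAinvim : ∀ {π}, A π '' ℬ = ℬ → A π⁻¹ '' ℬ = ℬ := by
    intro π h
    conv_lhs => rw [← h]
    rw [← Set.image_comp]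
    have h1 : A π⁻¹ ∘ A π = id := funext fun v => hAinv π v
    rw [h1, Set.image_id]
  have hAmulim : ∀ {π τ}, A π '' ℬ = ℬ → A τ '' ℬ = ℬ → A (π * τ) '' ℬ = ℬ := by
    intro π τ hπ hτ
    have h1 : A (π * τ) = A π ∘ A τ := funext fun v => hAmul π τ v
    rw [h1, Set.image_comp, hτ, hπ]
  -- induced permutation of parts
  set pmap : Equiv.Perm (Fin n) → (Fin m → Fin m) :=
    fun π i => if h : ∃ i', (P i).image ⇑π = P i' then h.choose else i with hpmapdef
  have hpmap_eq : ∀ (π : Equiv.Perm (Fin n)) i i', (P i).image ⇑π = P i' → pmap π i = i' := by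
    intro π i i' h
    have hex : ∃ j, (P i).image ⇑π = P j := ⟨i', h⟩
    have h1 : pmap π i = hex.choose := by rw [hpmapdef]; exact dif_pos hex
    rw [h1]
    exact hPeq (hex.choose_spec.symm.trans h)
  have hGpm : ∀ {π}, π ∈ G → ∀ i, (P i).image ⇑π = P (pmap π i) := by
    intro π hπ i
    obtain ⟨i', h⟩ := (hG π).mp hπ i
    rw [hpmap_eq π i i' h]; exact h
  -- the finsets
  set SG : Finset (Equiv.Perm (Fin n)) := univ.filter (fun π => π ∈ G) with hSGdef
  set SK : Finset (Equiv.Perm (Fin n)) := univ.filter Kp with hSKdef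
  set SStab : Finset (Equiv.Perm (Fin n)) :=
    univ.filter (fun π => π ∈ G ∧ A π '' ℬ = ℬ) with hSStabdef
  set SKStab : Finset (Equiv.Perm (Fin n)) :=
    univ.filter (fun π => Kp π ∧ A π '' ℬ = ℬ) with hSKStabdef
  set SZ : Finset (Equiv.Perm (Fin n)) :=
    univ.filter (fun π => Kp π ∧ ∀ i, A π (b i) = b i) with hSZdef
  set T : Finset (Fin m → Fin m) := SG.image pmap with hTdef
  have hmemSG : ∀ {π}, π ∈ SG ↔ π ∈ G := by intro π; rw [hSGdef, mem_filter]; simp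
  have hmemSK : ∀ {π}, π ∈ SK ↔ Kp π := by intro π; rw [hSKdef, mem_filter]; simp
  have hmemSStab : ∀ {π}, π ∈ SStab ↔ (π ∈ G ∧ A π '' ℬ = ℬ) := by
    intro π; rw [hSStabdef, mem_filter]; simp
  have hmemSKStab : ∀ {π}, π ∈ SKStab ↔ (Kp π ∧ A π '' ℬ = ℬ) := by
    intro π; rw [hSKStabdef, mem_filter]; simp
  have hmemSZ : ∀ {π}, π ∈ SZ ↔ (Kp π ∧ ∀ i, A π (b i) = b i) := by
    intro π; rw [hSZdef, mem_filter]; simp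
  -- Step 1 : SStab.card ≤ SKStab.card * T.card
  have step1 : SStab.card ≤ SKStab.card * T.card := by
    have h1 : SStab.card ≤ SKStab.card * (SStab.image pmap).card := by
      apply card_le_mul_card_image
      intro t ht
      obtain ⟨π₀, hπ₀mem, hπ₀t⟩ := mem_image.mp ht
      obtain ⟨hπ₀G, hπ₀S⟩ := hmemSStab.mp hπ₀mem
      apply card_le_card_of_injOn (fun π => π₀⁻¹ * π)
      · intro π hπ
        rw [mem_coe, mem_filter] at hπ
        obtain ⟨hπmem, hπt⟩ := hπ
        obtain ⟨hπG, hπS⟩ := hmemSStab.mp hπmem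
        refine hmemSKStab.mpr ⟨?_, hAmulim (hAinvim hπ₀S) hπS⟩
        intro i
        have e1 : (P i).image ⇑π = P (t i) := by
          rw [← hπt]; exact hGpm hπG i
        have e0 : (P i).image ⇑π₀ = P (t i) := by
          rw [← hπ₀t]; exact hGpm hπ₀G i
        have e2 : (P (t i)).image ⇑π₀⁻¹ = P i := by
          rw [← e0, image_image]
          have h3 : ⇑π₀⁻¹ ∘ ⇑π₀ = id := funext fun x => by simp
          rw [h3, image_id]
        have h4 : ⇑(π₀⁻¹ * π) = ⇑π₀⁻¹ ∘ ⇑π := rfl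
        rw [h4, ← image_image, e1, e2]
      · intro x _ y _ h
        exact mul_left_cancel h
    have h2 : (SStab.image pmap).card ≤ T.card := by
      apply card_le_card
      rw [hTdef]
      apply image_subset_image
      intro π hπ
      exact hmemSG.mpr (hmemSStab.mp hπ).1
    calc SStab.card ≤ SKStab.card * (SStab.image pmap).card := h1
      _ ≤ SKStab.card * T.card := Nat.mul_le_mul_left _ h2
  -- Step 2 : T.card * SK.card ≤ SG.card
  have step2 : SK.card * T.card ≤ SG.card := by
    apply mul_card_image_le_card
    intro t ht
    obtain ⟨π₀, hπ₀mem, hπ₀t⟩ := mem_image.mp ht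
    have hπ₀G := hmemSG.mp hπ₀mem
    apply card_le_card_of_injOn (fun κ => π₀ * κ)
    · intro κ hκ
      have hκK := hmemSK.mp hκ
      have himg : ∀ i, (P i).image ⇑(π₀ * κ) = P (pmap π₀ i) := by
        intro i
        have h4 : ⇑(π₀ * κ) = ⇑π₀ ∘ ⇑κ := rfl
        rw [h4, ← image_image, hκK i]
        exact hGpm hπ₀G i
      have hmemG : π₀ * κ ∈ G := (hG _).mpr fun i => ⟨pmap π₀ i, himg i⟩
      rw [mem_coe, mem_filter]
      refine ⟨hmemSG.mpr hmemG, ?_⟩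
      funext i
      have := hpmap_eq (π₀ * κ) i (pmap π₀ i) (himg i)
      rw [this, ← hπ₀t]
    · intro x _ y _ h
      exact mul_left_cancel h
  -- Step 3 : SKStab.card ≤ m! * ∏ (p i - 1)!
  set g : Equiv.Perm (Fin n) → ({x // x ∈ Bd} → (Fin n → ZMod 2)) :=
    fun π x => A π x.1 with hgdef
  have step3a : SKStab.card ≤ SZ.card * (SKStab.image g).card := by
    apply card_le_mul_card_image
    intro t ht
    obtain ⟨π₀, hπ₀mem, hπ₀t⟩ := mem_image.mp ht
    obtain ⟨hπ₀K, hπ₀S⟩ := hmemSKStab.mp hπ₀mem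
    apply card_le_card_of_injOn (fun π => π₀⁻¹ * π)
    · intro π hπ
      rw [mem_coe, mem_filter] at hπ
      obtain ⟨hπmem, hπt⟩ := hπ
      obtain ⟨hπK, hπS⟩ := hmemSKStab.mp hπmem
      refine hmemSZ.mpr ⟨hKmul (hKinv hπ₀K) hπK, ?_⟩
      intro i
      have h1 : A π (b i) = A π₀ (b i) :=
        congrFun (hπt.trans hπ₀t.symm) ⟨b i, hbBd i⟩
      rw [hAmul, h1, hAinv]
    · intro x _ y _ h; exact mul_left_cancel h
  have h3b : (SKStab.image g).card ≤ m.factorial := by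
    have hprop : ∀ h ∈ SKStab.image g, Function.Injective h ∧ ∀ x, h x ∈ Bd := by
      intro h hmem
      obtain ⟨π, hπmem, rfl⟩ := mem_image.mp hmem
      obtain ⟨hπK, hπS⟩ := hmemSKStab.mp hπmem
      constructor
      · intro x y hxy
        exact Subtype.ext (hAinj π hxy)
      · intro x
        have hx2 := hmemBd.mp x.2
        have h1 : A π x.1 ∈ ℬ := by
          rw [← hπS]; exact ⟨x.1, hx2.1, rfl⟩
        have h2 : A π x.1 ∉ ℬΓ := by
          intro hc
          have hΓm : A π x.1 ∈ Γ := hΓsub hc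
          have h3 : (x : Fin n → ZMod 2) ∈ Γ := (hKΓ hπK).mpr hΓm
          exact hx2.2 (hBcap _ hx2.1 h3)
        exact hmemBd.mpr ⟨h1, h2⟩
    have h2' : (SKStab.image g).card ≤ Fintype.card ({x // x ∈ Bd} ↪ {x // x ∈ Bd}) := by
      rw [← Fintype.card_coe (SKStab.image g)]
      have hinj : Function.Injective (fun h : ↥(SKStab.image g) =>
          (⟨fun x => ⟨h.1 x, (hprop h.1 h.2).2 x⟩,
            fun x y hxy => (hprop h.1 h.2).1 (congrArg Subtype.val hxy)⟩ :
            {x // x ∈ Bd} ↪ {x // x ∈ Bd})) := by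
        intro h h' he
        apply Subtype.ext
        funext x
        exact congrArg (fun (e : {x // x ∈ Bd} ↪ {x // x ∈ Bd}) => (e x : Fin n → ZMod 2)) he
      exact Fintype.card_le_of_injective _ hinj
    rw [Fintype.card_embedding_eq, Fintype.card_coe, hBdcard, Nat.descFactorial_self] at h2'
    exact h2'
  have step3c : SZ.card ≤ ∏ i, ((S i).card.factorial * (C i).card.factorial) := by
    have hmemSi : ∀ (π : Equiv.Perm (Fin n)), π ∈ SZ → ∀ (i) (x : Fin n), x ∈ S i → π x ∈ S i := by
      intro π hπ i x hx
      obtain ⟨hπK, hπb⟩ := hmemSZ.mp hπ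
      rw [hSdef, mem_filter] at hx ⊢
      refine ⟨hKel hπK hx.1, ?_⟩
      have h1 : b i (π⁻¹ (π x)) = b i (π x) := congrFun (hπb i) (π x)
      rw [show π⁻¹ (π x) = x from π.symm_apply_apply x] at h1
      rw [← h1]; exact hx.2
    have hmemCi : ∀ (π : Equiv.Perm (Fin n)), π ∈ SZ → ∀ (i) (x : Fin n), x ∈ C i → π x ∈ C i := by
      intro π hπ i x hx
      obtain ⟨hπK, hπb⟩ := hmemSZ.mp hπ
      rw [hCdef, mem_filter] at hx ⊢
      refine ⟨hKel hπK hx.1, ?_⟩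
      have h1 : b i (π⁻¹ (π x)) = b i (π x) := congrFun (hπb i) (π x)
      rw [show π⁻¹ (π x) = x from π.symm_apply_apply x] at h1
      rw [← h1]; exact hx.2
    have hcardT : Fintype.card (∀ i : Fin m, ({x // x ∈ S i} ↪ {x // x ∈ S i}) × ({x // x ∈ C i} ↪ {x // x ∈ C i}))
        = ∏ i, ((S i).card.factorial * (C i).card.factorial) := by
      rw [Fintype.card_pi]
      apply Finset.prod_congr rfl
      intro i _
      rw [Fintype.card_prod, Fintype.card_embedding_eq, Fintype.card_embedding_eq,
        Fintype.card_coe, Fintype.card_coe, Nat.descFactorial_self, Nat.descFactorial_self]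
    rw [← Fintype.card_coe SZ, ← hcardT]
    set F : ↥SZ → (∀ i : Fin m, ({x // x ∈ S i} ↪ {x // x ∈ S i}) × ({x // x ∈ C i} ↪ {x // x ∈ C i})) :=
      fun π i =>
        (⟨fun x => ⟨π.1 x.1, hmemSi π.1 π.2 i x.1 x.2⟩,
          fun x y hxy => Subtype.ext (π.1.injective (congrArg Subtype.val hxy))⟩,
         ⟨fun x => ⟨π.1 x.1, hmemCi π.1 π.2 i x.1 x.2⟩,
          fun x y hxy => Subtype.ext (π.1.injective (congrArg Subtype.val hxy))⟩) with hFdef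
    have hFinj : Function.Injective F := by
      intro π π' he
      apply Subtype.ext
      apply Equiv.ext
      intro a
      have ha : a ∈ P (part a) := hpmem a
      rcases hz2 (b (part a) a) with h | h
      · have hx : a ∈ C (part a) := by
          rw [hCdef]
          exact mem_filter.mpr ⟨ha, by rw [h]; decide⟩
        exact congrArg (fun q : (∀ i : Fin m, ({x // x ∈ S i} ↪ {x // x ∈ S i}) × ({x // x ∈ C i} ↪ {x // x ∈ C i})) => ((q (part a)).2 ⟨a, hx⟩ : Fin n)) he
      · have hx : a ∈ S (part a) := by
          rw [hSdef]
          exact mem_filter.mpr ⟨ha, h⟩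
        exact congrArg (fun q : (∀ i : Fin m, ({x // x ∈ S i} ↪ {x // x ∈ S i}) × ({x // x ∈ C i} ↪ {x // x ∈ C i})) => ((q (part a)).1 ⟨a, hx⟩ : Fin n)) he
    exact Fintype.card_le_of_injective F hFinj
  have step3 : SKStab.card ≤ m.factorial * ∏ i, ((P i).card - 1).factorial := by
    calc SKStab.card ≤ SZ.card * (SKStab.image g).card := step3a
      _ ≤ (∏ i, ((S i).card.factorial * (C i).card.factorial)) * m.factorial :=
          Nat.mul_le_mul step3c h3b
      _ ≤ (∏ i, ((P i).card - 1).factorial) * m.factorial := by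
          apply Nat.mul_le_mul_right
          apply Finset.prod_le_prod'
          intro i _
          have hle := fact_mul_fact_le' (S i).card (C i).card (hS1 i) (hC1 i)
          have he : (S i).card + (C i).card - 1 = (P i).card - 1 := by rw [hSC i]
          rwa [he] at hle
      _ = m.factorial * ∏ i, ((P i).card - 1).factorial := Nat.mul_comm _ _
  -- Step 4 : ∏ (p i)! ≤ SK.card
  have step4 : (∏ i, ((P i).card).factorial) ≤ SK.card := by
    have hcardP : Fintype.card (∀ i, Equiv.Perm {x // x ∈ P i}) = ∏ i, ((P i).card).factorial := by
      rw [Fintype.card_pi]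
      exact Finset.prod_congr rfl fun i _ => by rw [Fintype.card_perm, Fintype.card_coe]
    rw [← Fintype.card_coe SK, ← hcardP]
    have hfinj : ∀ (σ : ∀ i, Equiv.Perm {x // x ∈ P i}),
        Function.Injective (fun a : Fin n => ((σ (part a)) ⟨a, hpmem a⟩ : Fin n)) := by
      intro σ
      have key : ∀ (i j : Fin m) (u : {z // z ∈ P i}) (w : {z // z ∈ P j}), i = j →
          ((σ i u : Fin n) = (σ j w : Fin n)) → (u : Fin n) = (w : Fin n) := by
        intro i j u w hij
        subst hij
        intro h
        exact congrArg Subtype.val ((σ i).injective (Subtype.ext h))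
      intro x y hxy
      have h1 : part x = part y := by
        have hx : ((σ (part x)) ⟨x, hpmem x⟩ : Fin n) ∈ P (part x) := ((σ (part x)) ⟨x, hpmem x⟩).2
        have hy : ((σ (part y)) ⟨y, hpmem y⟩ : Fin n) ∈ P (part y) := ((σ (part y)) ⟨y, hpmem y⟩).2
        have hxy' : ((σ (part x)) ⟨x, hpmem x⟩ : Fin n) = ((σ (part y)) ⟨y, hpmem y⟩ : Fin n) := hxy
        rw [hxy'] at hx
        exact hdisj hx hy
      exact key _ _ _ _ h1 hxy
    set Φ : (∀ i, Equiv.Perm {x // x ∈ P i}) → Equiv.Perm (Fin n) :=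
      fun σ => Equiv.ofBijective _ ((Finite.injective_iff_bijective).mp (hfinj σ)) with hΦdef
    have hΦapp : ∀ σ a, Φ σ a = ((σ (part a)) ⟨a, hpmem a⟩ : Fin n) := fun σ a => rfl
    have hΦK : ∀ σ, Kp (Φ σ) := by
      intro σ i
      apply eq_of_subset_of_card_le
      · intro x hx
        obtain ⟨a, ha, rfl⟩ := mem_image.mp hx
        have h1 : part a = i := (hpuniq a i ha).symm
        have h2 : Φ σ a ∈ P (part a) := ((σ (part a)) ⟨a, hpmem a⟩).2
        rw [h1] at h2
        exact h2
      · rw [card_image_of_injective _ (Φ σ).injective]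
    have key2 : ∀ (σ : ∀ i, Equiv.Perm {x // x ∈ P i}) (i j : Fin m) (u : {z // z ∈ P i})
        (w : {z // z ∈ P j}), i = j → (u : Fin n) = (w : Fin n) →
        ((σ i u : Fin n)) = ((σ j w : Fin n)) := by
      intro σ i j u w hij
      subst hij
      intro huw
      rw [Subtype.ext huw]
    have hΦinj : Function.Injective (fun σ => (⟨Φ σ, hmemSK.mpr (hΦK σ)⟩ : ↥SK)) := by
      intro σ σ' he
      have hfun : ∀ a, Φ σ a = Φ σ' a := by
        intro a
        exact congrArg (fun (z : ↥SK) => (z : Equiv.Perm (Fin n)) a) he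
      funext i
      apply Equiv.ext
      intro x
      have hx1 : part (x : Fin n) = i := (hpuniq (x : Fin n) i x.2).symm
      apply Subtype.ext
      have e3 : ((σ i) x : Fin n) = Φ σ (x : Fin n) := by
        rw [hΦapp]
        exact key2 σ i (part (x : Fin n)) x ⟨(x : Fin n), hpmem _⟩ hx1.symm rfl
      have e4 : ((σ' i) x : Fin n) = Φ σ' (x : Fin n) := by
        rw [hΦapp]
        exact key2 σ' i (part (x : Fin n)) x ⟨(x : Fin n), hpmem _⟩ hx1.symm rfl
      rw [e3, e4]
      exact hfun _
    exact Fintype.card_le_of_injective _ hΦinj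
  -- final assembly
  have hfacts : (∏ i, (P i).card) * (∏ i, ((P i).card - 1).factorial)
      = ∏ i, ((P i).card).factorial := by
    rw [← Finset.prod_mul_distrib]
    exact Finset.prod_congr rfl fun i _ => Nat.mul_factorial_pred (by have := h2 i; omega)
  have main : (∏ i, (P i).card) * SStab.card ≤ m.factorial * SG.card := by
    calc (∏ i, (P i).card) * SStab.card
        ≤ (∏ i, (P i).card) * (SKStab.card * T.card) := Nat.mul_le_mul_left _ step1
      _ ≤ (∏ i, (P i).card) * ((m.factorial * ∏ i, ((P i).card - 1).factorial) * T.card) :=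
          Nat.mul_le_mul_left _ (Nat.mul_le_mul_right _ step3)
      _ = m.factorial * (((∏ i, (P i).card) * (∏ i, ((P i).card - 1).factorial)) * T.card) := by
          ring
      _ = m.factorial * ((∏ i, ((P i).card).factorial) * T.card) := by rw [hfacts]
      _ ≤ m.factorial * (SK.card * T.card) :=
          Nat.mul_le_mul_left _ (Nat.mul_le_mul_right _ step4)
      _ ≤ m.factorial * SG.card := Nat.mul_le_mul_left _ step2
  have e1 : Nat.card {π : Equiv.Perm (Fin n) //
      π ∈ G ∧ (fun v : Fin n → ZMod 2 => fun j => v (π⁻¹ j)) '' ℬ = ℬ} = SStab.card := by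
    rw [Nat.card_eq_fintype_card, hSStabdef]
    rw [Fintype.card_subtype]
  have e2 : Nat.card G = SG.card := by
    rw [Nat.card_eq_fintype_card, hSGdef]
    rw [Fintype.card_subtype]
  rw [e1, e2]
  exact main
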